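/- arXiv:1812.02572 — 3 statements merged into one kernel-verified Lean document; each statement's English description precedes it below -/
import Mathlib

section
/- If a distance measure D satisfies the triangle inequality (D(ρ,σ) ≤ D(ρ,τ) + D(τ,σ) for all states τ) and the data processing inequality (D(N(ρ), N(σ)) ≤ D(ρ,σ) for every channel N), then for every channel N the resource generating power equals the resource increasing power: Ω_D(N) = Ω̃_D(N). -/
open scoped Kronecker ComplexOrder

variable {ι : Type*} [Fintype ι] [DecidableEq ι]

/-- A quantum state: positive semidefinite matrix of trace one. -/
def IsState (ρ : Matrix ι ι ℂ) : Prop := ρ.PosSemidef ∧ ρ.trace = 1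

/-- The action of `id_n ⊗ N` on block matrices. -/
def idTensorMap (n : ℕ) (N : Matrix ι ι ℂ →ₗ[ℂ] Matrix ι ι ℂ)
    (M : Matrix (Fin n × ι) (Fin n × ι) ℂ) : Matrix (Fin n × ι) (Fin n × ι) ℂ :=
  Matrix.of fun p q => N (Matrix.of fun k l => M (p.1, k) (q.1, l)) p.2 q.2

/-- A quantum channel: completely positive trace preserving linear map. -/
structure Channel (ι : Type*) [Fintype ι] [DecidableEq ι] where
  map : Matrix ι ι ℂ →ₗ[ℂ] Matrix ι ι ℂ
  cp : ∀ (n : ℕ) (M : Matrix (Fin n × ι) (Fin n × ι) ℂ), M.PosSemidef →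
        (idTensorMap n map M).PosSemidef
  tp : ∀ A : Matrix ι ι ℂ, (map A).trace = A.trace

/-- The trace norm ‖A‖₁ = Tr √(AᴴA). -/
noncomputable def traceNorm (A : Matrix ι ι ℂ) : ℝ :=
  ((Matrix.posSemidef_conjTranspose_mul_self A).1.eigenvectorUnitary.1 *
    Matrix.diagonal (((↑) : ℝ → ℂ) ∘ Real.sqrt ∘ (Matrix.posSemidef_conjTranspose_mul_self A).1.eigenvalues) *
    (star (Matrix.posSemidef_conjTranspose_mul_self A).1.eigenvectorUnitary : Matrix ι ι ℂ)).trace.re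

/-- Trace-norm resource measure ω₁. -/
noncomputable def omega1 (F : Set (Matrix ι ι ℂ)) (ρ : Matrix ι ι ℂ) : ℝ :=
  (1/2) * sInf ((fun σ => traceNorm (ρ - σ)) '' F)

/-- Trace-norm resource generating power Ω₁. -/
noncomputable def genPower1 (F : Set (Matrix ι ι ℂ)) (N : Matrix ι ι ℂ → Matrix ι ι ℂ) : ℝ :=
  sSup ((fun ρ => omega1 F (N ρ)) '' F)

/-- Trace-norm resource increasing power Ω̃₁. -/
noncomputable def incPower1 (F : Set (Matrix ι ι ℂ)) (N : Matrix ι ι ℂ → Matrix ι ι ℂ) : ℝ :=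
  sSup ((fun ρ => omega1 F (N ρ) - omega1 F ρ) '' {ρ | IsState ρ})

/-- Holevo–Helstrom success probability of discriminating two channels with probe `ρ`. -/
noncomputable def psuccPair (N M : Matrix ι ι ℂ → Matrix ι ι ℂ) (ρ : Matrix ι ι ℂ) : ℝ :=
  1/2 + (1/4) * traceNorm (N ρ - M ρ)

/-- Success probability of discriminating `N` from the set of channels `Free` with probe `ρ`. -/
noncomputable def psuccChan (N : Matrix ι ι ℂ → Matrix ι ι ℂ) (Free : Set (Channel ι))
    (ρ : Matrix ι ι ℂ) : ℝ :=
  sInf ((fun M : Channel ι => psuccPair N (⇑M.map) ρ) '' Free)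

/-- Maximum success probability of discriminating `N` from `Free` using probes from `F`. -/
noncomputable def psuccFF (N : Matrix ι ι ℂ → Matrix ι ι ℂ) (Free : Set (Channel ι))
    (F : Set (Matrix ι ι ℂ)) : ℝ :=
  sSup ((fun ρ => psuccChan N Free ρ) '' F)

/-- Resource measure induced by a distance measure `D`. -/
noncomputable def omegaD (D : Matrix ι ι ℂ → Matrix ι ι ℂ → ℝ) (F : Set (Matrix ι ι ℂ))
    (ρ : Matrix ι ι ℂ) : ℝ :=
  sInf ((fun σ => D ρ σ) '' F)

/-- Resource generating power induced by a distance measure `D`. -/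
noncomputable def genPowerD (D : Matrix ι ι ℂ → Matrix ι ι ℂ → ℝ) (F : Set (Matrix ι ι ℂ))
    (N : Matrix ι ι ℂ → Matrix ι ι ℂ) : ℝ :=
  sSup ((fun ρ => omegaD D F (N ρ)) '' F)

/-- Resource increasing power induced by a distance measure `D`. -/
noncomputable def incPowerD (D : Matrix ι ι ℂ → Matrix ι ι ℂ → ℝ) (F : Set (Matrix ι ι ℂ))
    (N : Matrix ι ι ℂ → Matrix ι ι ℂ) : ℝ :=
  sSup ((fun ρ => omegaD D F (N ρ) - omegaD D F ρ) '' {ρ | IsState ρ})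

lemma Channel.isState_map {ι : Type*} [Fintype ι] [DecidableEq ι]
    (N : Channel ι) {ρ : Matrix ι ι ℂ} (h : IsState ρ) : IsState (N.map ρ) := by
  refine ⟨?_, by rw [N.tp]; exact h.2⟩
  have hM : (ρ.submatrix (Prod.snd : Fin 1 × ι → ι) Prod.snd).PosSemidef :=
    h.1.submatrix _
  have hcp := N.cp 1 _ hM
  have key : idTensorMap 1 N.map (ρ.submatrix Prod.snd Prod.snd) =
      (N.map ρ).submatrix (Prod.snd : Fin 1 × ι → ι) Prod.snd := rfl
  rw [key] at hcp
  have := hcp.submatrix (fun i : ι => ((0 : Fin 1), i))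
  have he : ((N.map ρ).submatrix (Prod.snd : Fin 1 × ι → ι) Prod.snd).submatrix
      (fun i : ι => ((0 : Fin 1), i)) (fun i : ι => ((0 : Fin 1), i)) = N.map ρ := by
    ext i j; rfl
  rwa [he] at this

/-- for a distance `D` satisfying the triangle inequality and the data processing
inequality, the resource generating power equals the resource increasing power. -/
theorem stmt1
    (F : Set (Matrix ι ι ℂ)) (hFne : F.Nonempty) (hFstate : ∀ ρ ∈ F, IsState ρ)
    (hFconv : Convex ℝ F) (hFclosed : IsClosed F)
    (D : Matrix ι ι ℂ → Matrix ι ι ℂ → ℝ)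
    (hDpos : ∀ ρ σ, IsState ρ → IsState σ → 0 ≤ D ρ σ)
    (hDzero : ∀ ρ σ, IsState ρ → IsState σ → (D ρ σ = 0 ↔ ρ = σ))
    (hTri : ∀ ρ σ τ, IsState ρ → IsState σ → IsState τ → D ρ σ ≤ D ρ τ + D τ σ)
    (hDPI : ∀ (M : Channel ι) (ρ σ : Matrix ι ι ℂ), IsState ρ → IsState σ →
      D (M.map ρ) (M.map σ) ≤ D ρ σ)
    (N : Channel ι) :
    genPowerD D F (⇑N.map) = incPowerD D F (⇑N.map) := by
  -- abbreviations
  have hNst : ∀ ρ, IsState ρ → IsState (N.map ρ) := fun ρ h => N.isState_map h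
  have hone : ∀ ρ : Matrix ι ι ℂ, ((fun σ => D ρ σ) '' F).Nonempty :=
    fun ρ => hFne.image _
  have hbdd : ∀ ρ, IsState ρ → BddBelow ((fun σ => D ρ σ) '' F) := by
    rintro ρ hρ
    exact ⟨0, by rintro x ⟨σ, hσ, rfl⟩; exact hDpos ρ σ hρ (hFstate σ hσ)⟩
  have hnn : ∀ ρ, IsState ρ → 0 ≤ omegaD D F ρ := by
    intro ρ hρ
    exact le_csInf (hone ρ) (by rintro x ⟨σ, hσ, rfl⟩; exact hDpos ρ σ hρ (hFstate σ hσ))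
  have hzero : ∀ ρ ∈ F, omegaD D F ρ = 0 := by
    intro ρ hρ
    refine le_antisymm ?_ (hnn ρ (hFstate ρ hρ))
    have : D ρ ρ = 0 := (hDzero ρ ρ (hFstate ρ hρ) (hFstate ρ hρ)).2 rfl
    calc omegaD D F ρ ≤ D ρ ρ := csInf_le (hbdd ρ (hFstate ρ hρ)) ⟨ρ, hρ, rfl⟩
      _ = 0 := this
  set G : Set ℝ := (fun ρ => omegaD D F (N.map ρ)) '' F with hG
  set I : Set ℝ := (fun ρ => omegaD D F (N.map ρ) - omegaD D F ρ) '' {ρ | IsState ρ} with hI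
  have hGI : G ⊆ I := by
    rintro x ⟨ρ, hρ, rfl⟩
    refine ⟨ρ, hFstate ρ hρ, ?_⟩
    dsimp only
    rw [hzero ρ hρ, sub_zero]
  have hGne : G.Nonempty := hFne.image _
  have hIne : I.Nonempty := hGne.mono hGI
  -- key inequality
  have hkey : ∀ ρ, IsState ρ → ∀ σ ∈ F,
      omegaD D F (N.map ρ) ≤ D ρ σ + omegaD D F (N.map σ) := by
    intro ρ hρ σ hσ
    have hσst := hFstate σ hσ
    have hmain : omegaD D F (N.map ρ) - D ρ σ ≤ omegaD D F (N.map σ) := by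
      refine le_csInf (hone _) ?_
      rintro x ⟨τ, hτ, rfl⟩
      dsimp only
      have h1 : omegaD D F (N.map ρ) ≤ D (N.map ρ) τ :=
        csInf_le (hbdd _ (hNst ρ hρ)) ⟨τ, hτ, rfl⟩
      have h2 : D (N.map ρ) τ ≤ D (N.map ρ) (N.map σ) + D (N.map σ) τ :=
        hTri _ _ _ (hNst ρ hρ) (hFstate τ hτ) (hNst σ hσst)
      have h3 : D (N.map ρ) (N.map σ) ≤ D ρ σ := hDPI N ρ σ hρ hσst
      linarith
    linarith
  show sSup G = sSup I
  by_cases hb : BddAbove G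
  · have hIb : ∀ x ∈ I, x ≤ sSup G := by
      rintro x ⟨ρ, hρ, rfl⟩
      dsimp only
      have hmain : omegaD D F (N.map ρ) - sSup G ≤ omegaD D F ρ := by
        refine le_csInf (hone _) ?_
        rintro x ⟨σ, hσ, rfl⟩
        dsimp only
        have h1 := hkey ρ hρ σ hσ
        have h2 : omegaD D F (N.map σ) ≤ sSup G := le_csSup hb ⟨σ, hσ, rfl⟩
        linarith
      linarith
    refine le_antisymm (csSup_le_csSup ⟨sSup G, hIb⟩ hGne hGI) (csSup_le hIne hIb)
  · have hIub : ¬ BddAbove I := fun h => hb (h.mono hGI)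
    rw [Real.sSup_of_not_bddAbove hb, Real.sSup_of_not_bddAbove hIub]
end

section
/- Suppose the free states on the composite system are ℱ_AB = conv{ρ_A ⊗ ρ_B : ρ_A ∈ ℱ_A, ρ_B ∈ ℱ_B}. Then for any channels N₁ on system A and N₂ on system B, the trace-norm resource generating power satisfies Ω₁(N₁ ⊗ N₂) ≥ max{Ω₁(N₁), Ω₁(N₂)}, where Ω₁(N₁ ⊗ N₂) is computed with respect to ℱ_AB and Ω₁(Nᵢ) with respect to ℱ_A, ℱ_B respectively. -/
open scoped Kronecker ComplexOrder

variable {ι : Type*} [Fintype ι] [DecidableEq ι]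

/-- The action of the tensor product channel `N₁ ⊗ N₂` on matrices of the composite system,
characterized by `(N₁ ⊗ N₂)(A ⊗ B) = N₁(A) ⊗ N₂(B)` and linearity. -/
noncomputable def tensorMapAction {A B : Type*} [Fintype A] [DecidableEq A]
    [Fintype B] [DecidableEq B]
    (N₁ : Matrix A A ℂ →ₗ[ℂ] Matrix A A ℂ) (N₂ : Matrix B B ℂ →ₗ[ℂ] Matrix B B ℂ)
    (M : Matrix (A × B) (A × B) ℂ) : Matrix (A × B) (A × B) ℂ :=
  ∑ i : A, ∑ j : A,
    (N₁ (Matrix.single i j 1)) ⊗ₖ (N₂ (Matrix.of fun k l => M (i, k) (j, l)))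
namespace Aux

open Matrix

variable {n : Type*} [Fintype n] [DecidableEq n] {H : Matrix n n ℂ}

noncomputable def cfun (hH : H.IsHermitian) (f : ℝ → ℝ) : Matrix n n ℂ :=
  (hH.eigenvectorUnitary : Matrix n n ℂ) *
    Matrix.diagonal (fun i => (f (hH.eigenvalues i) : ℂ)) *
    (star hH.eigenvectorUnitary : Matrix n n ℂ)

lemma cfun_eq_cfc (hH : H.IsHermitian) (f : ℝ → ℝ) : cfun hH f = cfc f H := by
  rw [hH.cfc_eq, Matrix.IsHermitian.cfc, Unitary.conjStarAlgAut_apply]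
  rfl

lemma cfun_congr (hH : H.IsHermitian) (f g : ℝ → ℝ)
    (h : ∀ i, f (hH.eigenvalues i) = g (hH.eigenvalues i)) : cfun hH f = cfun hH g := by
  unfold cfun
  rw [show (fun i => (f (hH.eigenvalues i) : ℂ)) = (fun i => (g (hH.eigenvalues i) : ℂ)) from
    funext fun i => by rw [h i]]

lemma traceNorm_eq_cfun (A : Matrix n n ℂ) :
    traceNorm A = (cfun (Matrix.posSemidef_conjTranspose_mul_self A).1 Real.sqrt).trace.re := rfl

lemma star_mul_self_unitary (hH : H.IsHermitian) :
    (star hH.eigenvectorUnitary : Matrix n n ℂ) * (hH.eigenvectorUnitary : Matrix n n ℂ) = 1 := by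
  simpa using congrArg (fun u => (u : Matrix n n ℂ)) (unitary.star_mul_self hH.eigenvectorUnitary)

lemma self_mul_star_unitary (hH : H.IsHermitian) :
    (hH.eigenvectorUnitary : Matrix n n ℂ) * (star hH.eigenvectorUnitary : Matrix n n ℂ) = 1 := by
  simpa using congrArg (fun u => (u : Matrix n n ℂ)) (unitary.mul_star_self hH.eigenvectorUnitary)

lemma cfun_mul (hH : H.IsHermitian) (f g : ℝ → ℝ) :
    cfun hH f * cfun hH g = cfun hH (fun x => f x * g x) := by
  unfold cfun
  simp only [Matrix.mul_assoc]
  rw [← Matrix.mul_assoc (star hH.eigenvectorUnitary : Matrix n n ℂ), star_mul_self_unitary hH,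
    Matrix.one_mul, ← Matrix.mul_assoc (Matrix.diagonal _), Matrix.diagonal_mul_diagonal]
  norm_cast

lemma cfun_trace (hH : H.IsHermitian) (f : ℝ → ℝ) :
    (cfun hH f).trace = ∑ i, (f (hH.eigenvalues i) : ℂ) := by
  unfold cfun
  rw [Matrix.trace_mul_comm, ← Matrix.mul_assoc, star_mul_self_unitary hH, Matrix.one_mul,
    Matrix.trace_diagonal]

lemma cfun_herm (hH : H.IsHermitian) (f : ℝ → ℝ) : (cfun hH f).IsHermitian := by
  have hd : Matrix.conjTranspose (Matrix.diagonal (fun i => (f (hH.eigenvalues i) : ℂ)))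
      = Matrix.diagonal (fun i => (f (hH.eigenvalues i) : ℂ)) := by
    rw [Matrix.diagonal_conjTranspose]
    refine congrArg _ (funext fun i => ?_)
    simp only [Pi.star_apply]
    exact Complex.conj_ofReal _
  unfold cfun Matrix.IsHermitian
  simp [Matrix.conjTranspose_mul, hd, Matrix.star_eq_conjTranspose, Matrix.mul_assoc]

lemma cfun_psd (hH : H.IsHermitian) (f : ℝ → ℝ) (hf : ∀ x, 0 ≤ f x) :
    (cfun hH f).PosSemidef := by
  have hd : Matrix.PosSemidef (Matrix.diagonal (fun i => (f (hH.eigenvalues i) : ℂ))) :=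
    Matrix.PosSemidef.diagonal fun i => Complex.zero_le_real.2 (hf _)
  simpa [cfun, Matrix.star_eq_conjTranspose] using
    hd.mul_mul_conjTranspose_same (hH.eigenvectorUnitary : Matrix n n ℂ)

lemma cfun_id (hH : H.IsHermitian) : cfun hH (fun x => x) = H := by
  have hsa : IsSelfAdjoint H := hH
  rw [cfun_eq_cfc]
  exact cfc_id' ℝ H

lemma cfun_sub (hH : H.IsHermitian) (f g : ℝ → ℝ) :
    cfun hH f - cfun hH g = cfun hH (fun x => f x - g x) := by
  unfold cfun
  rw [← Matrix.sub_mul, ← Matrix.mul_sub, Matrix.diagonal_sub]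
  push_cast
  rfl

lemma cfun_add (hH : H.IsHermitian) (f g : ℝ → ℝ) :
    cfun hH f + cfun hH g = cfun hH (fun x => f x + g x) := by
  unfold cfun
  rw [← Matrix.add_mul, ← Matrix.mul_add, Matrix.diagonal_add]
  push_cast
  rfl

lemma cfun_one (hH : H.IsHermitian) : cfun hH (fun _ => 1) = 1 := by
  unfold cfun
  simp [self_mul_star_unitary hH]

lemma sqrt_eq_cfun_abs (hH : H.IsHermitian) :
    cfun (Matrix.posSemidef_conjTranspose_mul_self H).1 Real.sqrt = cfun hH (fun x => |x|) := by
  have hsa : IsSelfAdjoint H := hH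
  rw [cfun_eq_cfc, cfun_eq_cfc]
  have e : Hᴴ * H = cfc (fun x : ℝ => x * x) H := by
    rw [hH.eq, cfc_mul (fun x : ℝ => x) (fun x : ℝ => x) H, cfc_id' ℝ H]
  rw [e, ← cfc_comp Real.sqrt (fun x : ℝ => x * x) H]
  refine cfc_congr fun x _ => ?_
  simp [Real.sqrt_mul_self_eq_abs]

lemma traceNorm_herm (hH : H.IsHermitian) : traceNorm H = ∑ i, |hH.eigenvalues i| := by
  rw [traceNorm_eq_cfun, sqrt_eq_cfun_abs hH, cfun_trace]
  rw [Complex.re_sum]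
  simp


lemma psd_trace_re_nonneg {A : Matrix n n ℂ} (hA : A.PosSemidef) : 0 ≤ A.trace.re := by
  simpa using (Complex.le_def.1 hA.trace_nonneg).1

lemma trace_mul_psd_re_nonneg {A B : Matrix n n ℂ} (hA : A.PosSemidef) (hB : B.PosSemidef) :
    0 ≤ (A * B).trace.re := by
  set S := cfun hA.1 Real.sqrt with hS
  have hSS : S * S = A := by
    rw [hS, cfun_mul]
    conv_rhs => rw [← cfun_id hA.1]
    exact cfun_congr hA.1 _ _ fun i => Real.mul_self_sqrt (hA.eigenvalues_nonneg i)
  have hSpsd : S.PosSemidef := cfun_psd hA.1 _ fun x => Real.sqrt_nonneg x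
  have h1 : A * B = S * (S * B) := by
    rw [← Matrix.mul_assoc, hSS]
  have h2 : ((S * B) * S).trace.re = (A * B).trace.re := by
    rw [← Matrix.trace_mul_comm, ← h1]
  rw [← h2]
  have h3 : (S * B) * S = S * B * (S)ᴴ := by
    rw [hSpsd.1.eq]
  rw [h3]
  exact psd_trace_re_nonneg (hB.mul_mul_conjTranspose_same S)

lemma holder {Q : Matrix n n ℂ} (hH : H.IsHermitian)
    (h1 : (1 - Q).PosSemidef) (h2 : (1 + Q).PosSemidef) :
    ((Q * H).trace).re ≤ traceNorm H := by
  set Hp := cfun hH (fun x => max x 0) with hHp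
  set Hm := cfun hH (fun x => max (-x) 0) with hHm
  have hPp : Hp.PosSemidef := cfun_psd hH _ fun x => le_max_right _ _
  have hPm : Hm.PosSemidef := cfun_psd hH _ fun x => le_max_right _ _
  have hfun : (fun x : ℝ => x) = fun x : ℝ => max x 0 - max (-x) 0 := by
    funext x
    rcases le_total 0 x with h | h
    · rw [max_eq_left h, max_eq_right (neg_nonpos.2 h), sub_zero]
    · rw [max_eq_right h, max_eq_left (neg_nonneg.2 h), zero_sub, neg_neg]
  have hsplit : H = Hp - Hm := by
    rw [hHp, hHm, cfun_sub hH]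
    conv_lhs => rw [← cfun_id hH]
    rw [hfun]
  have hTN : traceNorm H = Hp.trace.re + Hm.trace.re := by
    rw [traceNorm_herm hH, hHp, hHm, cfun_trace, cfun_trace, Complex.re_sum, Complex.re_sum]
    rw [← Finset.sum_add_distrib]
    refine Finset.sum_congr rfl fun i _ => ?_
    simp only [Complex.ofReal_re]
    rcases le_total 0 (hH.eigenvalues i) with h | h
    · rw [abs_of_nonneg h, max_eq_left h, max_eq_right (neg_nonpos.2 h), add_zero]
    · rw [abs_of_nonpos h, max_eq_right h, max_eq_left (neg_nonneg.2 h), zero_add]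
  have key1 : (Q * Hp).trace.re ≤ Hp.trace.re := by
    have := trace_mul_psd_re_nonneg h1 hPp
    have e : (1 - Q) * Hp = Hp - Q * Hp := by rw [Matrix.sub_mul, Matrix.one_mul]
    rw [e, Matrix.trace_sub, Complex.sub_re] at this
    linarith
  have key2 : -Hm.trace.re ≤ (Q * Hm).trace.re := by
    have := trace_mul_psd_re_nonneg h2 hPm
    have e : (1 + Q) * Hm = Hm + Q * Hm := by rw [Matrix.add_mul, Matrix.one_mul]
    rw [e, Matrix.trace_add, Complex.add_re] at this
    linarith
  have : Q * H = Q * Hp - Q * Hm := by rw [hsplit, Matrix.mul_sub]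
  rw [this, Matrix.trace_sub, Complex.sub_re, hTN]
  linarith

lemma exists_dual (hH : H.IsHermitian) :
    ∃ P : Matrix n n ℂ, P.IsHermitian ∧ (1 - P).PosSemidef ∧ (1 + P).PosSemidef ∧
      ((P * H).trace).re = traceNorm H := by
  classical
  set s : ℝ → ℝ := fun x => if 0 ≤ x then 1 else -1 with hs
  refine ⟨cfun hH s, cfun_herm hH s, ?_, ?_, ?_⟩
  · have e : (1 : Matrix n n ℂ) - cfun hH s = cfun hH (fun x => 1 - s x) := by
      rw [← cfun_one hH, cfun_sub hH]
    rw [e]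
    refine cfun_psd hH _ fun x => ?_
    by_cases h : 0 ≤ x <;> simp [hs, h]
  · have e : (1 : Matrix n n ℂ) + cfun hH s = cfun hH (fun x => 1 + s x) := by
      rw [← cfun_one hH, cfun_add hH]
    rw [e]
    refine cfun_psd hH _ fun x => ?_
    by_cases h : 0 ≤ x <;> simp [hs, h]
  · have e := cfun_mul hH s (fun x => x)
    rw [cfun_id hH] at e
    have e2 : (fun x : ℝ => s x * x) = fun x : ℝ => |x| := by
      funext x
      by_cases h : 0 ≤ x
      · simp [hs, h, abs_of_nonneg h]
      · push_neg at h
        simp [hs, not_le.2 h, abs_of_neg h]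
    rw [e, e2, traceNorm_herm hH, cfun_trace, Complex.re_sum]
    
    simp

lemma traceNorm_psd {A : Matrix n n ℂ} (hA : A.PosSemidef) : traceNorm A = A.trace.re := by
  have h : A = cfun (Matrix.posSemidef_conjTranspose_mul_self A).1 Real.sqrt := by
    rw [sqrt_eq_cfun_abs hA.1, cfun_congr hA.1 _ (fun x => x)
      fun i => abs_of_nonneg (hA.eigenvalues_nonneg i), cfun_id]
  rw [traceNorm_eq_cfun, ← h]

lemma traceNorm_nonneg (A : Matrix n n ℂ) : 0 ≤ traceNorm A :=
  by rw [traceNorm_eq_cfun]; exact psd_trace_re_nonneg (cfun_psd _ _ fun x => Real.sqrt_nonneg x)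

end Aux


section Part3

open Matrix

variable {n : Type*} [Fintype n] [DecidableEq n]
variable {m p : Type*} [Fintype m] [DecidableEq m] [Fintype p] [DecidableEq p]

lemma kron_conjTranspose (M : Matrix m m ℂ) (N : Matrix p p ℂ) :
    (M ⊗ₖ N)ᴴ = Mᴴ ⊗ₖ Nᴴ := by
  ext ⟨i, k⟩ ⟨j, l⟩
  simp [Matrix.conjTranspose_apply, Matrix.kroneckerMap_apply]

lemma psd_kron {M : Matrix m m ℂ} {N : Matrix p p ℂ} (hM : M.PosSemidef) (hN : N.PosSemidef) :
    (M ⊗ₖ N).PosSemidef := by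
  exact hM.kronecker hN

lemma isState_kron {a : Matrix m m ℂ} {b : Matrix p p ℂ} (ha : IsState a) (hb : IsState b) :
    IsState (a ⊗ₖ b) :=
  ⟨psd_kron ha.1 hb.1, by rw [Matrix.trace_kronecker, ha.2, hb.2, mul_one]⟩

lemma convex_states : Convex ℝ {ρ : Matrix n n ℂ | IsState ρ} := by
  intro x hx y hy a b ha hb hab
  refine ⟨⟨?_, ?_⟩, ?_⟩
  · show (a • x + b • y)ᴴ = a • x + b • y
    have hx1 : xᴴ = x := hx.1.1
    have hy1 : yᴴ = y := hy.1.1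
    rw [Matrix.conjTranspose_add, Matrix.conjTranspose_smul, Matrix.conjTranspose_smul,
      hx1, hy1, star_trivial, star_trivial]
  · exact ((hx.1.smul ha).add (hy.1.smul hb)).2
  · rw [Matrix.trace_add, Matrix.trace_smul, Matrix.trace_smul, hx.2, hy.2]
    have hc : (a : ℂ) + (b : ℂ) = 1 := by exact_mod_cast hab
    simpa [Complex.real_smul] using hc

noncomputable def ptraceB (m p : Type*) [Fintype m] [DecidableEq m] [Fintype p] [DecidableEq p] :
    Matrix (m × p) (m × p) ℂ →ₗ[ℝ] Matrix m m ℂ where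
  toFun M := Matrix.of fun i j => ∑ k, M (i, k) (j, k)
  map_add' M N := by
    ext i j
    simp [Finset.sum_add_distrib]
  map_smul' c M := by
    ext i j
    simp [Finset.mul_sum]

noncomputable def ptraceA (m p : Type*) [Fintype m] [DecidableEq m] [Fintype p] [DecidableEq p] :
    Matrix (m × p) (m × p) ℂ →ₗ[ℝ] Matrix p p ℂ where
  toFun M := Matrix.of fun i j => ∑ k, M (k, i) (k, j)
  map_add' M N := by
    ext i j
    simp [Finset.sum_add_distrib]
  map_smul' c M := by
    ext i j
    simp [Finset.mul_sum]

lemma ptraceB_kron (a : Matrix m m ℂ) (b : Matrix p p ℂ) :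
    ptraceB m p (a ⊗ₖ b) = b.trace • a := by
  ext i j
  simp [ptraceB, Matrix.kroneckerMap_apply, Matrix.trace, Matrix.diag, Finset.sum_mul, Finset.mul_sum, mul_comm]

lemma ptraceA_kron (a : Matrix m m ℂ) (b : Matrix p p ℂ) :
    ptraceA m p (a ⊗ₖ b) = a.trace • b := by
  ext i j
  simp [ptraceA, Matrix.kroneckerMap_apply, Matrix.trace, Matrix.diag, Finset.sum_mul, Finset.mul_sum, mul_comm]

lemma trace_kron_one_mul (P : Matrix m m ℂ) (M : Matrix (m × p) (m × p) ℂ) :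
    ((P ⊗ₖ (1 : Matrix p p ℂ)) * M).trace = (P * (ptraceB m p M)).trace := by
  have h1 : ((P ⊗ₖ (1 : Matrix p p ℂ)) * M).trace
      = ∑ i, ∑ j, P i j * ∑ k, M (j, k) (i, k) := by
    simp only [Matrix.trace, Matrix.diag, Matrix.mul_apply, Matrix.kroneckerMap_apply,
      Matrix.one_apply, Fintype.sum_prod_type, mul_ite, mul_one, mul_zero, ite_mul, zero_mul,
      Finset.sum_ite_eq, Finset.sum_ite_eq', Finset.mem_univ, if_true, Finset.mul_sum]
    refine Finset.sum_congr rfl fun i _ => ?_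
    exact Finset.sum_comm
  rw [h1]
  simp only [Matrix.trace, Matrix.diag, Matrix.mul_apply, ptraceB, LinearMap.coe_mk,
    AddHom.coe_mk, Matrix.of_apply]

lemma trace_one_kron_mul (P : Matrix p p ℂ) (M : Matrix (m × p) (m × p) ℂ) :
    (((1 : Matrix m m ℂ) ⊗ₖ P) * M).trace = (P * (ptraceA m p M)).trace := by
  have h1 : (((1 : Matrix m m ℂ) ⊗ₖ P) * M).trace
      = ∑ i, ∑ j, P i j * ∑ k, M (k, j) (k, i) := by
    simp only [Matrix.trace, Matrix.diag, Matrix.mul_apply, Matrix.kroneckerMap_apply,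
      Matrix.one_apply, Fintype.sum_prod_type, mul_ite, mul_one, mul_zero, ite_mul, zero_mul,
      Finset.mem_univ, if_true, Finset.mul_sum]
    rw [Finset.sum_comm]
    refine Finset.sum_congr rfl fun y _ => ?_
    have h : ∀ x : m, ∑ x_1 : m, ∑ x_2 : p,
        (if x = x_1 then 1 * P y x_2 * M (x_1, x_2) (x, y) else 0)
        = ∑ x_2 : p, P y x_2 * M (x, x_2) (x, y) := by
      intro x
      rw [Finset.sum_comm]
      simp [Finset.sum_ite_eq, Finset.sum_ite_eq']
    rw [Finset.sum_congr rfl fun x _ => h x]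
    rw [Finset.sum_comm]
  rw [h1]
  simp only [Matrix.trace, Matrix.diag, Matrix.mul_apply, ptraceA, LinearMap.coe_mk,
    AddHom.coe_mk, Matrix.of_apply]

end Part3


section Part4

open Matrix

variable {m p : Type*} [Fintype m] [DecidableEq m] [Fintype p] [DecidableEq p]

lemma channel_state (N : Channel m) {ρ : Matrix m m ℂ} (hρ : IsState ρ) :
    IsState (N.map ρ) := by
  constructor
  · have h1 : ((ρ.submatrix (Prod.snd : Fin 1 × m → m) Prod.snd)).PosSemidef :=
      hρ.1.submatrix _
    have h2 := N.cp 1 _ h1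
    have e : N.map ρ = (idTensorMap 1 N.map (ρ.submatrix (Prod.snd : Fin 1 × m → m) Prod.snd)).submatrix
        (fun i => ((0 : Fin 1), i)) (fun i => ((0 : Fin 1), i)) := by
      ext i j
      rfl
    rw [e]
    exact h2.submatrix _
  · rw [N.tp ρ, hρ.2]

lemma sum_kron {γ : Type*} (s : Finset γ) (f : γ → Matrix m m ℂ) (B : Matrix p p ℂ) :
    (∑ i ∈ s, f i) ⊗ₖ B = ∑ i ∈ s, (f i) ⊗ₖ B := by
  ext ⟨i, k⟩ ⟨j, l⟩
  simp [Matrix.kroneckerMap_apply, Matrix.sum_apply, Finset.sum_mul]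

lemma tma_kron (N₁ : Matrix m m ℂ →ₗ[ℂ] Matrix m m ℂ) (N₂ : Matrix p p ℂ →ₗ[ℂ] Matrix p p ℂ)
    (a : Matrix m m ℂ) (b : Matrix p p ℂ) :
    tensorMapAction N₁ N₂ (a ⊗ₖ b) = (N₁ a) ⊗ₖ (N₂ b) := by
  unfold tensorMapAction
  have hblock : ∀ i j, (Matrix.of fun k l => (a ⊗ₖ b) (i, k) (j, l)) = a i j • b := by
    intro i j
    ext k l
    simp [Matrix.kroneckerMap_apply]
  have step : ∀ i j, (N₁ (Matrix.single i j 1)) ⊗ₖ (N₂ (Matrix.of fun k l => (a ⊗ₖ b) (i, k) (j, l)))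
      = (a i j • N₁ (Matrix.single i j 1)) ⊗ₖ (N₂ b) := by
    intro i j
    rw [hblock, N₂.map_smul, Matrix.kronecker_smul, Matrix.smul_kronecker]
  calc ∑ i, ∑ j, (N₁ (Matrix.single i j 1)) ⊗ₖ (N₂ (Matrix.of fun k l => (a ⊗ₖ b) (i, k) (j, l)))
      = ∑ i, ∑ j, (a i j • N₁ (Matrix.single i j 1)) ⊗ₖ (N₂ b) := by
        exact Finset.sum_congr rfl fun i _ => Finset.sum_congr rfl fun j _ => step i j
    _ = (∑ i, ∑ j, a i j • N₁ (Matrix.single i j 1)) ⊗ₖ (N₂ b) := by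
        rw [sum_kron]
        exact Finset.sum_congr rfl fun i _ => (sum_kron _ _ _).symm
    _ = (N₁ a) ⊗ₖ (N₂ b) := by
        have hsum : (∑ i, ∑ j, a i j • N₁ (Matrix.single i j 1)) = N₁ a := by
          conv_rhs => rw [Matrix.matrix_eq_sum_single a]
          rw [map_sum]
          refine Finset.sum_congr rfl fun i _ => ?_
          rw [map_sum]
          refine Finset.sum_congr rfl fun j _ => ?_
          rw [← N₁.map_smul]
          congr 1
          rw [Matrix.smul_single, smul_eq_mul, mul_one]
        rw [hsum]

/-- `tensorMapAction` as an `ℝ`-linear map. -/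
noncomputable def tmaLin (N₁ : Matrix m m ℂ →ₗ[ℂ] Matrix m m ℂ)
    (N₂ : Matrix p p ℂ →ₗ[ℂ] Matrix p p ℂ) :
    Matrix (m × p) (m × p) ℂ →ₗ[ℝ] Matrix (m × p) (m × p) ℂ where
  toFun := tensorMapAction N₁ N₂
  map_add' M M' := by
    unfold tensorMapAction
    rw [← Finset.sum_add_distrib]
    refine Finset.sum_congr rfl fun i _ => ?_
    rw [← Finset.sum_add_distrib]
    refine Finset.sum_congr rfl fun j _ => ?_
    have hb : (Matrix.of fun k l => (M + M') (i, k) (j, l))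
        = (Matrix.of fun k l => M (i, k) (j, l)) + (Matrix.of fun k l => M' (i, k) (j, l)) := by
      ext k l
      simp
    rw [hb, map_add, Matrix.kronecker_add]
  map_smul' c M := by
    unfold tensorMapAction
    simp only [RingHom.id_apply]
    rw [Finset.smul_sum]
    refine Finset.sum_congr rfl fun i _ => ?_
    rw [Finset.smul_sum]
    refine Finset.sum_congr rfl fun j _ => ?_
    have hb : (Matrix.of fun k l => (c • M) (i, k) (j, l))
        = (c : ℂ) • (Matrix.of fun k l => M (i, k) (j, l)) := by
      ext k l
      simp [Complex.real_smul]
    rw [hb, N₂.map_smul, Matrix.kronecker_smul]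
    ext ⟨x, y⟩ ⟨z, w⟩
    simp [Complex.real_smul]

lemma state_of_mem_hull {S : Set (Matrix m m ℂ)} (hS : ∀ ρ ∈ S, IsState ρ) {τ : Matrix m m ℂ}
    (hτ : τ ∈ convexHull ℝ S) : IsState τ :=
  convexHull_min hS convex_states hτ

lemma traceNorm_state_sub_le {ρ τ : Matrix m m ℂ} (hρ : IsState ρ) (hτ : IsState τ) :
    traceNorm (ρ - τ) ≤ 2 := by
  have hherm : (ρ - τ).IsHermitian := hρ.1.1.sub hτ.1.1
  obtain ⟨P, hPh, hP1, hP2, hPeq⟩ := Aux.exists_dual hherm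
  rw [← hPeq, Matrix.mul_sub, Matrix.trace_sub, Complex.sub_re]
  have b1 : (P * ρ).trace.re ≤ 1 := by
    have := Aux.holder hρ.1.1 hP1 hP2
    rw [Aux.traceNorm_psd hρ.1, hρ.2] at this
    simpa using this
  have b2 : (-1 : ℝ) ≤ (P * τ).trace.re := by
    have h1' : ((1 : Matrix m m ℂ) - -P).PosSemidef := by
      rw [sub_neg_eq_add]
      exact hP2
    have h2' : ((1 : Matrix m m ℂ) + -P).PosSemidef := by
      rw [← sub_eq_add_neg]
      exact hP1
    have := Aux.holder hτ.1.1 h1' h2'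
    rw [Aux.traceNorm_psd hτ.1, hτ.2, Matrix.neg_mul, Matrix.trace_neg] at this
    simp only [Complex.neg_re, Complex.one_re] at this
    linarith
  linarith

end Part4


section Helpers

open Matrix

variable {m p : Type*} [Fintype m] [DecidableEq m] [Fintype p] [DecidableEq p]

lemma sub_kron (M N : Matrix m m ℂ) (B : Matrix p p ℂ) :
    (M - N) ⊗ₖ B = M ⊗ₖ B - N ⊗ₖ B := by
  ext ⟨i, k⟩ ⟨j, l⟩
  simp [Matrix.kroneckerMap_apply, sub_mul]

lemma kron_sub (B : Matrix m m ℂ) (M N : Matrix p p ℂ) :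
    B ⊗ₖ (M - N) = B ⊗ₖ M - B ⊗ₖ N := by
  ext ⟨i, k⟩ ⟨j, l⟩
  simp [Matrix.kroneckerMap_apply, mul_sub]

lemma add_kron (M N : Matrix m m ℂ) (B : Matrix p p ℂ) :
    (M + N) ⊗ₖ B = M ⊗ₖ B + N ⊗ₖ B := by
  ext ⟨i, k⟩ ⟨j, l⟩
  simp [Matrix.kroneckerMap_apply, add_mul]

lemma kron_add (B : Matrix m m ℂ) (M N : Matrix p p ℂ) :
    B ⊗ₖ (M + N) = B ⊗ₖ M + B ⊗ₖ N := by
  ext ⟨i, k⟩ ⟨j, l⟩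
  simp [Matrix.kroneckerMap_apply, mul_add]

lemma omega1_nonneg (F : Set (Matrix m m ℂ)) (X : Matrix m m ℂ) : 0 ≤ omega1 F X := by
  refine mul_nonneg (by norm_num) (Real.sInf_nonneg ?_)
  rintro _ ⟨σ, _, rfl⟩
  exact Aux.traceNorm_nonneg _

lemma isHermitian_kron {X : Matrix m m ℂ} {Y : Matrix p p ℂ}
    (hX : X.IsHermitian) (hY : Y.IsHermitian) : (X ⊗ₖ Y).IsHermitian := by
  have h1 : Xᴴ = X := hX
  have h2 : Yᴴ = Y := hY
  show (X ⊗ₖ Y)ᴴ = X ⊗ₖ Y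
  rw [kron_conjTranspose, h1, h2]

end Helpers

/-- `Ω₁(N₁ ⊗ N₂) ≥ max{Ω₁(N₁), Ω₁(N₂)}` when the free states of the composite
system are the convex hull of products of free states. -/
theorem stmt6 {A B : Type*} [Fintype A] [DecidableEq A] [Fintype B] [DecidableEq B]
    (FA : Set (Matrix A A ℂ)) (hFAne : FA.Nonempty) (hFAstate : ∀ ρ ∈ FA, IsState ρ)
    (hFAconv : Convex ℝ FA) (hFAclosed : IsClosed FA)
    (FB : Set (Matrix B B ℂ)) (hFBne : FB.Nonempty) (hFBstate : ∀ ρ ∈ FB, IsState ρ)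
    (hFBconv : Convex ℝ FB) (hFBclosed : IsClosed FB)
    (N₁ : Channel A) (N₂ : Channel B) :
    max (genPower1 FA (⇑N₁.map)) (genPower1 FB (⇑N₂.map))
      ≤ genPower1 (convexHull ℝ {ρ : Matrix (A × B) (A × B) ℂ | ∃ a ∈ FA, ∃ b ∈ FB, ρ = a ⊗ₖ b})
          (tensorMapAction N₁.map N₂.map) := by
  classical
  obtain ⟨a₀, ha₀⟩ := hFAne
  obtain ⟨b₀, hb₀⟩ := hFBne
  set Sprod : Set (Matrix (A × B) (A × B) ℂ) := {ρ | ∃ a ∈ FA, ∃ b ∈ FB, ρ = a ⊗ₖ b} with hSprod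
  set FAB : Set (Matrix (A × B) (A × B) ℂ) := convexHull ℝ Sprod with hFAB
  set TM : Matrix (A × B) (A × B) ℂ → Matrix (A × B) (A × B) ℂ :=
    tensorMapAction N₁.map N₂.map with hTMdef
  have hSstate : ∀ ρ ∈ Sprod, IsState ρ := by
    rintro ρ ⟨a, ha, b, hb, rfl⟩
    exact isState_kron (hFAstate a ha) (hFBstate b hb)
  have hFABstate : ∀ τ ∈ FAB, IsState τ := fun τ hτ => state_of_mem_hull hSstate hτ
  have hTMstate : ∀ τ ∈ FAB, IsState (TM τ) := by
    intro τ hτ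
    have himg : tmaLin N₁.map N₂.map τ ∈ tmaLin N₁.map N₂.map '' FAB := ⟨τ, hτ, rfl⟩
    rw [hFAB, LinearMap.image_convexHull] at himg
    refine state_of_mem_hull ?_ himg
    rintro _ ⟨ρ', ⟨a, ha, b, hb, rfl⟩, rfl⟩
    show IsState (tensorMapAction N₁.map N₂.map (a ⊗ₖ b))
    rw [tma_kron]
    exact isState_kron (channel_state N₁ (hFAstate a ha)) (channel_state N₂ (hFBstate b hb))
  have hτ₀ : (a₀ ⊗ₖ b₀ : Matrix (A × B) (A × B) ℂ) ∈ FAB :=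
    subset_convexHull _ _ ⟨a₀, ha₀, b₀, hb₀, rfl⟩
  have hbb : ∀ (X : Matrix (A × B) (A × B) ℂ) (F : Set (Matrix (A × B) (A × B) ℂ)),
      BddBelow ((fun σ => traceNorm (X - σ)) '' F) := by
    intro X F
    refine ⟨0, ?_⟩
    rintro _ ⟨σ, _, rfl⟩
    exact Aux.traceNorm_nonneg _
  have hub : ∀ τ ∈ FAB, omega1 FAB (TM τ) ≤ 1 := by
    intro τ hτ
    have hZ := hTMstate τ hτ
    have h2 : sInf ((fun σ => traceNorm (TM τ - σ)) '' FAB) ≤ 2 := by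
      refine csInf_le_of_le (hbb _ _) ⟨a₀ ⊗ₖ b₀, hτ₀, rfl⟩ ?_
      exact traceNorm_state_sub_le hZ (hFABstate _ hτ₀)
    have : omega1 FAB (TM τ) = 1/2 * sInf ((fun σ => traceNorm (TM τ - σ)) '' FAB) := rfl
    rw [this]
    linarith
  have hbddAbove : BddAbove ((fun ρ => omega1 FAB (TM ρ)) '' FAB) := by
    refine ⟨1, ?_⟩
    rintro _ ⟨τ, hτ, rfl⟩
    exact hub τ hτ
  have hgp_nonneg : 0 ≤ genPower1 FAB TM := by
    refine Real.sSup_nonneg ?_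
    rintro _ ⟨τ, hτ, rfl⟩
    exact omega1_nonneg _ _
  -- Key inequality, system A
  have keyA : ∀ ρ ∈ FA, omega1 FA (N₁.map ρ) ≤ omega1 FAB (TM (ρ ⊗ₖ b₀)) := by
    intro ρ hρ
    have hX : IsState (N₁.map ρ) := channel_state N₁ (hFAstate ρ hρ)
    have hY : IsState (N₂.map b₀) := channel_state N₂ (hFBstate b₀ hb₀)
    have hk : TM (ρ ⊗ₖ b₀) = (N₁.map ρ) ⊗ₖ (N₂.map b₀) := tma_kron _ _ _ _
    rw [hk]
    show 1/2 * sInf ((fun σ => traceNorm (N₁.map ρ - σ)) '' FA)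
      ≤ 1/2 * sInf ((fun σ => traceNorm ((N₁.map ρ) ⊗ₖ (N₂.map b₀) - σ)) '' FAB)
    refine mul_le_mul_of_nonneg_left ?_ (by norm_num)
    refine le_csInf ⟨_, ⟨a₀ ⊗ₖ b₀, hτ₀, rfl⟩⟩ ?_
    rintro t ⟨τ, hτ, rfl⟩
    set X := N₁.map ρ with hXdef
    set Y := N₂.map b₀ with hYdef
    set σ := ptraceB A B τ with hσdef
    have hσFA : σ ∈ FA := by
      have himg : σ ∈ ptraceB A B '' FAB := ⟨τ, hτ, rfl⟩
      rw [hFAB, LinearMap.image_convexHull] at himg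
      have hsub : ptraceB A B '' Sprod ⊆ FA := by
        rintro _ ⟨_, ⟨a, ha, b, hb, rfl⟩, rfl⟩
        show ptraceB A B (a ⊗ₖ b) ∈ FA
        rw [ptraceB_kron, (hFBstate b hb).2, one_smul]
        exact ha
      have h2 := convexHull_mono hsub himg
      rwa [hFAconv.convexHull_eq] at h2
    have hτst := hFABstate τ hτ
    have hherm : (X - σ).IsHermitian := hX.1.1.sub (hFAstate σ hσFA).1.1
    obtain ⟨P, hPh, hP1, hP2, hPeq⟩ := Aux.exists_dual hherm
    have hMherm : (X ⊗ₖ Y - τ).IsHermitian :=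
      (isHermitian_kron hX.1.1 hY.1.1).sub hτst.1.1
    have hmid : traceNorm (X - σ) ≤ traceNorm (X ⊗ₖ Y - τ) := by
      rw [← hPeq]
      have e1 : ptraceB A B (X ⊗ₖ Y - τ) = X - σ := by
        rw [map_sub, ptraceB_kron, hY.2, one_smul]
      have e2 : ((P ⊗ₖ (1 : Matrix B B ℂ)) * (X ⊗ₖ Y - τ)).trace = (P * (X - σ)).trace := by
        rw [trace_kron_one_mul, e1]
      rw [← e2]
      have hQ1 : ((1 : Matrix (A × B) (A × B) ℂ) - P ⊗ₖ (1 : Matrix B B ℂ)).PosSemidef := by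
        have e : (1 : Matrix (A × B) (A × B) ℂ) - P ⊗ₖ (1 : Matrix B B ℂ)
            = ((1 : Matrix A A ℂ) - P) ⊗ₖ (1 : Matrix B B ℂ) := by
          rw [sub_kron, Matrix.one_kronecker_one]
        rw [e]
        exact psd_kron hP1 Matrix.PosSemidef.one
      have hQ2 : ((1 : Matrix (A × B) (A × B) ℂ) + P ⊗ₖ (1 : Matrix B B ℂ)).PosSemidef := by
        have e : (1 : Matrix (A × B) (A × B) ℂ) + P ⊗ₖ (1 : Matrix B B ℂ)
            = ((1 : Matrix A A ℂ) + P) ⊗ₖ (1 : Matrix B B ℂ) := by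
          rw [add_kron, Matrix.one_kronecker_one]
        rw [e]
        exact psd_kron hP2 Matrix.PosSemidef.one
      exact Aux.holder hMherm hQ1 hQ2
    refine le_trans (csInf_le ⟨0, ?_⟩ ⟨σ, hσFA, rfl⟩) hmid
    rintro _ ⟨s', _, rfl⟩
    exact Aux.traceNorm_nonneg _
  -- Key inequality, system B
  have keyB : ∀ ρ ∈ FB, omega1 FB (N₂.map ρ) ≤ omega1 FAB (TM (a₀ ⊗ₖ ρ)) := by
    intro ρ hρ
    have hX : IsState (N₁.map a₀) := channel_state N₁ (hFAstate a₀ ha₀)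
    have hY : IsState (N₂.map ρ) := channel_state N₂ (hFBstate ρ hρ)
    have hk : TM (a₀ ⊗ₖ ρ) = (N₁.map a₀) ⊗ₖ (N₂.map ρ) := tma_kron _ _ _ _
    rw [hk]
    show 1/2 * sInf ((fun σ => traceNorm (N₂.map ρ - σ)) '' FB)
      ≤ 1/2 * sInf ((fun σ => traceNorm ((N₁.map a₀) ⊗ₖ (N₂.map ρ) - σ)) '' FAB)
    refine mul_le_mul_of_nonneg_left ?_ (by norm_num)
    refine le_csInf ⟨_, ⟨a₀ ⊗ₖ b₀, hτ₀, rfl⟩⟩ ?_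
    rintro t ⟨τ, hτ, rfl⟩
    set X := N₁.map a₀ with hXdef
    set Y := N₂.map ρ with hYdef
    set σ := ptraceA A B τ with hσdef
    have hσFB : σ ∈ FB := by
      have himg : σ ∈ ptraceA A B '' FAB := ⟨τ, hτ, rfl⟩
      rw [hFAB, LinearMap.image_convexHull] at himg
      have hsub : ptraceA A B '' Sprod ⊆ FB := by
        rintro _ ⟨_, ⟨a, ha, b, hb, rfl⟩, rfl⟩
        show ptraceA A B (a ⊗ₖ b) ∈ FB
        rw [ptraceA_kron, (hFAstate a ha).2, one_smul]
        exact hb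
      have h2 := convexHull_mono hsub himg
      rwa [hFBconv.convexHull_eq] at h2
    have hτst := hFABstate τ hτ
    have hherm : (Y - σ).IsHermitian := hY.1.1.sub (hFBstate σ hσFB).1.1
    obtain ⟨P, hPh, hP1, hP2, hPeq⟩ := Aux.exists_dual hherm
    have hMherm : (X ⊗ₖ Y - τ).IsHermitian :=
      (isHermitian_kron hX.1.1 hY.1.1).sub hτst.1.1
    have hmid : traceNorm (Y - σ) ≤ traceNorm (X ⊗ₖ Y - τ) := by
      rw [← hPeq]
      have e1 : ptraceA A B (X ⊗ₖ Y - τ) = Y - σ := by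
        rw [map_sub, ptraceA_kron, hX.2, one_smul]
      have e2 : (((1 : Matrix A A ℂ) ⊗ₖ P) * (X ⊗ₖ Y - τ)).trace = (P * (Y - σ)).trace := by
        rw [trace_one_kron_mul, e1]
      rw [← e2]
      have hQ1 : ((1 : Matrix (A × B) (A × B) ℂ) - (1 : Matrix A A ℂ) ⊗ₖ P).PosSemidef := by
        have e : (1 : Matrix (A × B) (A × B) ℂ) - (1 : Matrix A A ℂ) ⊗ₖ P
            = (1 : Matrix A A ℂ) ⊗ₖ ((1 : Matrix B B ℂ) - P) := by
          rw [kron_sub, Matrix.one_kronecker_one]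
        rw [e]
        exact psd_kron Matrix.PosSemidef.one hP1
      have hQ2 : ((1 : Matrix (A × B) (A × B) ℂ) + (1 : Matrix A A ℂ) ⊗ₖ P).PosSemidef := by
        have e : (1 : Matrix (A × B) (A × B) ℂ) + (1 : Matrix A A ℂ) ⊗ₖ P
            = (1 : Matrix A A ℂ) ⊗ₖ ((1 : Matrix B B ℂ) + P) := by
          rw [kron_add, Matrix.one_kronecker_one]
        rw [e]
        exact psd_kron Matrix.PosSemidef.one hP2
      exact Aux.holder hMherm hQ1 hQ2
    refine le_trans (csInf_le ⟨0, ?_⟩ ⟨σ, hσFB, rfl⟩) hmid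
    rintro _ ⟨s', _, rfl⟩
    exact Aux.traceNorm_nonneg _
  -- Assemble
  refine max_le ?_ ?_
  · refine Real.sSup_le ?_ hgp_nonneg
    rintro _ ⟨ρ, hρ, rfl⟩
    have hmem : (ρ ⊗ₖ b₀ : Matrix (A × B) (A × B) ℂ) ∈ FAB :=
      subset_convexHull _ _ ⟨ρ, hρ, b₀, hb₀, rfl⟩
    exact le_trans (keyA ρ hρ) (le_csSup hbddAbove ⟨ρ ⊗ₖ b₀, hmem, rfl⟩)
  · refine Real.sSup_le ?_ hgp_nonneg
    rintro _ ⟨ρ, hρ, rfl⟩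
    have hmem : (a₀ ⊗ₖ ρ : Matrix (A × B) (A × B) ℂ) ∈ FAB :=
      subset_convexHull _ _ ⟨a₀, ha₀, ρ, hρ, rfl⟩
    exact le_trans (keyB ρ hρ) (le_csSup hbddAbove ⟨a₀ ⊗ₖ ρ, hmem, rfl⟩)
end

section
/- Let 𝔍 be a set of channels on d×d matrices that contains, for every incoherent state σ, the replacement channel τ ↦ Tr(τ)σ (this holds for each of SIO, IO, DIO and MIO). If the discrimination measurement is restricted to incoherent POVMs, i.e. pairs {Π, I−Π} with Π diagonal in the standard basis and 0 ≤ Π ≤ I, then for every channel N and every state ρ the success probability of distinguishing N from 𝔍 equals that of random guessing: p^I_succ(N, 𝔍, ρ) := inf_{M∈𝔍} sup_{Π diagonal, 0≤Π≤I} [(1/2)·Tr(N(ρ)Π) + (1/2)·Tr(M(ρ)(I−Π))] = 1/2. -/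
open scoped Kronecker ComplexOrder

variable {ι : Type*} [Fintype ι] [DecidableEq ι]

/-- The set of incoherent states: states diagonal in the fixed (standard) basis. -/
def incoherentStates (d : ℕ) : Set (Matrix (Fin d) (Fin d) ℂ) :=
  {ρ | IsState ρ ∧ ρ.IsDiag}
/-- Success probability of discriminating `N` from the set `J`, with probe `ρ`, when the
measurement is restricted to incoherent (diagonal) two-outcome POVMs `{P, I - P}`. -/
noncomputable def psuccIncohPOVM {d : ℕ} (N : Matrix (Fin d) (Fin d) ℂ → Matrix (Fin d) (Fin d) ℂ)
    (J : Set (Channel (Fin d))) (ρ : Matrix (Fin d) (Fin d) ℂ) : ℝ :=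
  sInf ((fun M : Channel (Fin d) =>
    sSup ((fun P : Matrix (Fin d) (Fin d) ℂ =>
        (1/2) * ((N ρ * P).trace.re) + (1/2) * ((M.map ρ * (1 - P)).trace.re)) ''
      {P | P.IsDiag ∧ P.PosSemidef ∧ (1 - P).PosSemidef})) '' J)


section Aux
variable {ι : Type*} [Fintype ι] [DecidableEq ι]
open scoped MatrixOrder

lemma psd_diag_nonneg {A : Matrix ι ι ℂ} (hA : A.PosSemidef) (i : ι) : 0 ≤ A i i := by
  exact hA.diag_nonneg

lemma psd_trace_nonneg {A : Matrix ι ι ℂ} (hA : A.PosSemidef) : 0 ≤ A.trace :=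
  Finset.sum_nonneg fun i _ => psd_diag_nonneg hA i

lemma psd_trace_mul_nonneg {A B : Matrix ι ι ℂ} (hA : A.PosSemidef) (hB : B.PosSemidef) :
    0 ≤ (A * B).trace := by
  have h2 : (A * B).trace = (CFC.sqrt A * B * CFC.sqrt A).trace := by
    conv_lhs => rw [← CFC.sqrt_mul_sqrt_self A hA.nonneg, Matrix.mul_assoc, Matrix.trace_mul_comm,
      Matrix.mul_assoc]
    rw [Matrix.mul_assoc]
  rw [h2]
  have hHerm : (CFC.sqrt A).conjTranspose = CFC.sqrt A :=
    (Matrix.nonneg_iff_posSemidef.mp (CFC.sqrt_nonneg A)).isHermitian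
  have : (CFC.sqrt A * B * (CFC.sqrt A).conjTranspose).PosSemidef := hB.mul_mul_conjTranspose_same _
  rw [hHerm] at this
  exact psd_trace_nonneg this

lemma channel_psd (M : Channel ι) {ρ : Matrix ι ι ℂ} (h : ρ.PosSemidef) :
    (M.map ρ).PosSemidef := by
  have hbig : (Matrix.of fun (p : Fin 1 × ι) (q : Fin 1 × ι) => ρ p.2 q.2).PosSemidef := by
    have := h.submatrix (Prod.snd : Fin 1 × ι → ι)
    convert this using 2
    rfl
  have hres := M.cp 1 _ hbig
  have : M.map ρ = (idTensorMap 1 M.map (Matrix.of fun p q => ρ p.2 q.2)).submatrix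
      (fun i : ι => ((0 : Fin 1), i)) (fun i : ι => ((0 : Fin 1), i)) := by
    ext i j
    simp only [idTensorMap, Matrix.submatrix_apply, Matrix.of_apply]
    rfl
  rw [this]
  exact hres.submatrix _

/-- trace of A*P for diagonal P -/
lemma trace_mul_isDiag {A P : Matrix ι ι ℂ} (hP : P.IsDiag) :
    (A * P).trace = ∑ i, A i i * P i i := by
  unfold Matrix.trace
  refine Finset.sum_congr rfl fun i _ => ?_
  show ∑ j, A i j * P j i = A i i * P i i
  refine Finset.sum_eq_single i (fun j _ hj => ?_) (by simp)
  rw [hP hj, mul_zero]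

end Aux

/-- with incoherent POVMs, the success probability of distinguishing any channel
from a set of channels containing all incoherent replacement channels is that of random
guessing, `1/2`. -/
theorem stmt14 {d : ℕ} (J : Set (Channel (Fin d)))
    (hRepl : ∀ σ ∈ incoherentStates d, ∃ M ∈ J,
      ∀ τ : Matrix (Fin d) (Fin d) ℂ, M.map τ = τ.trace • σ)
    (N : Channel (Fin d)) (ρ : Matrix (Fin d) (Fin d) ℂ) (hρ : IsState ρ) :
    psuccIncohPOVM (⇑N.map) J ρ = 1/2 := by
  classical
  set A := N.map ρ with hAdef
  have hApsd : A.PosSemidef := channel_psd N hρ.1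
  have hAtr : A.trace = 1 := by rw [hAdef, N.tp, hρ.2]
  -- the dephased (diagonal) version of A
  set σ : Matrix (Fin d) (Fin d) ℂ := Matrix.diagonal (fun i => A i i) with hσdef
  have hσpsd : σ.PosSemidef := Matrix.PosSemidef.diagonal (fun i => psd_diag_nonneg hApsd i)
  have hσtr : σ.trace = 1 := by
    rw [hσdef, Matrix.trace_diagonal, ← hAtr]; rfl
  have hσdiag : σ.IsDiag := Matrix.isDiag_diagonal _
  obtain ⟨M, hMJ, hM⟩ := hRepl σ ⟨⟨hσpsd, hσtr⟩, hσdiag⟩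
  have hMρ : M.map ρ = σ := by rw [hM ρ, hρ.2, one_smul]
  -- the POVM set
  set POVMs : Set (Matrix (Fin d) (Fin d) ℂ) :=
    {P | P.IsDiag ∧ P.PosSemidef ∧ (1 - P).PosSemidef} with hPOVMs
  have hzero_mem : (0 : Matrix (Fin d) (Fin d) ℂ) ∈ POVMs :=
    ⟨Matrix.isDiag_zero, Matrix.PosSemidef.zero, by simpa using Matrix.PosDef.one.posSemidef⟩
  -- key: for diagonal P, tr(A P) = tr(σ P)
  have hkey : ∀ P : Matrix (Fin d) (Fin d) ℂ, P.IsDiag → (A * P).trace = (σ * P).trace := by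
    intro P hP
    rw [trace_mul_isDiag hP, trace_mul_isDiag hP]
    refine Finset.sum_congr rfl fun i _ => ?_
    rw [hσdef]; simp [Matrix.diagonal_apply_eq]
  -- the inner value function for a channel M'
  -- for our replacement channel M, every value equals 1/2
  have hMval : ∀ P ∈ POVMs,
      (1/2 : ℝ) * ((A * P).trace.re) + (1/2) * ((M.map ρ * (1 - P)).trace.re) = 1/2 := by
    intro P hP
    rw [hMρ, hkey P hP.1]
    have : (σ * P).trace + (σ * (1 - P)).trace = 1 := by
      rw [← Matrix.trace_add, ← Matrix.mul_add]
      simp [hσtr]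
    have hre : (σ * P).trace.re + (σ * (1 - P)).trace.re = 1 := by
      have := congrArg Complex.re this
      simpa [Complex.add_re] using this
    linarith
  -- the inner sSup for M equals 1/2
  have hMsup : sSup ((fun P : Matrix (Fin d) (Fin d) ℂ =>
      (1/2 : ℝ) * ((A * P).trace.re) + (1/2) * ((M.map ρ * (1 - P)).trace.re)) '' POVMs)
      = 1/2 := by
    have : ((fun P : Matrix (Fin d) (Fin d) ℂ =>
        (1/2 : ℝ) * ((A * P).trace.re) + (1/2) * ((M.map ρ * (1 - P)).trace.re)) '' POVMs)
        = {1/2} := by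
      apply Set.eq_singleton_iff_nonempty_unique_mem.mpr
      constructor
      · exact ⟨_, Set.mem_image_of_mem _ hzero_mem⟩
      · rintro x ⟨P, hP, rfl⟩
        exact hMval P hP
    rw [this, csSup_singleton]
  -- every channel M' in J gives inner sSup ≥ 1/2
  have hlb : ∀ M' : Channel (Fin d), M' ∈ J → (1/2 : ℝ) ≤
      sSup ((fun P : Matrix (Fin d) (Fin d) ℂ =>
        (1/2 : ℝ) * ((A * P).trace.re) + (1/2) * ((M'.map ρ * (1 - P)).trace.re)) '' POVMs) := by
    intro M' _
    have hM'psd : (M'.map ρ).PosSemidef := channel_psd M' hρ.1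
    have hM'tr : (M'.map ρ).trace = 1 := by rw [M'.tp, hρ.2]
    -- bounded above by 1
    have hbdd : BddAbove ((fun P : Matrix (Fin d) (Fin d) ℂ =>
        (1/2 : ℝ) * ((A * P).trace.re) + (1/2) * ((M'.map ρ * (1 - P)).trace.re)) '' POVMs) := by
      refine ⟨1, ?_⟩
      rintro x ⟨P, ⟨hPd, hPpsd, hP1psd⟩, rfl⟩
      have h1 : (A * P).trace.re ≤ 1 := by
        have hsplit : (A * P).trace + (A * (1 - P)).trace = 1 := by
          rw [← Matrix.trace_add, ← Matrix.mul_add]; simp [hAtr]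
        have h2 := psd_trace_mul_nonneg hApsd hP1psd
        have h2re : 0 ≤ (A * (1 - P)).trace.re := (Complex.le_def.mp h2).1
        have := congrArg Complex.re hsplit
        simp [Complex.add_re] at this
        linarith
      have h3 : (M'.map ρ * (1 - P)).trace.re ≤ 1 := by
        have hsplit : (M'.map ρ * P).trace + (M'.map ρ * (1 - P)).trace = 1 := by
          rw [← Matrix.trace_add, ← Matrix.mul_add]; simp [hM'tr]
        have h2 := psd_trace_mul_nonneg hM'psd hPpsd
        have h2re : 0 ≤ (M'.map ρ * P).trace.re := (Complex.le_def.mp h2).1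
        have := congrArg Complex.re hsplit
        simp [Complex.add_re] at this
        linarith
      linarith
    have hmem : (1/2 : ℝ) ∈ ((fun P : Matrix (Fin d) (Fin d) ℂ =>
        (1/2 : ℝ) * ((A * P).trace.re) + (1/2) * ((M'.map ρ * (1 - P)).trace.re)) '' POVMs) := by
      refine ⟨0, hzero_mem, ?_⟩
      simp [hM'tr]
    exact le_csSup hbdd hmem
  -- put it together
  unfold psuccIncohPOVM
  apply le_antisymm
  · apply csInf_le
    · refine ⟨1/2, ?_⟩
      rintro x ⟨M', hM', rfl⟩
      exact hlb M' hM'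
    · exact ⟨M, hMJ, hMsup⟩
  · apply le_csInf
    · exact ⟨_, Set.mem_image_of_mem _ hMJ⟩
    · rintro x ⟨M', hM', rfl⟩
      exact hlb M' hM'
end
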